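/- arXiv:math/0307208 — 2 statements merged into one kernel-verified Lean document; each statement's English description precedes it below -/
import Mathlib

section
/- Let p be an odd prime. Then the only square root of p in the ring ℤ/2pℤ is p itself: for every m ∈ ZMod (2p), if m² = p then m = p. (Consequently the idempotent p in ZMod (2p) is not a Smarandache idempotent.) -/
theorem odd_prime_unique_sqrt_mod_two_mul (p : ℕ) (hp : p.Prime) (hodd : Odd p) :
    ∀ m : ZMod (2 * p), m ^ 2 = p → m = p := by
  intro m hm
  have hp2 : p ≠ 2 := by rintro rfl; simp [Nat.odd_iff] at hodd
  have hco : Nat.Coprime 2 p := (Nat.coprime_primes Nat.prime_two hp).mpr (Ne.symm hp2)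
  haveI : Fact p.Prime := ⟨hp⟩
  let e := ZMod.chineseRemainder hco
  apply e.injective
  have h2 : (ZMod.castHom (dvd_mul_right 2 p) (ZMod 2)) m
      = (ZMod.castHom (dvd_mul_right 2 p) (ZMod 2)) ((p : ZMod (2*p))) := by
    have h := congrArg (ZMod.castHom (dvd_mul_right 2 p) (ZMod 2)) hm
    simp only [map_pow, map_natCast] at h ⊢
    have hpo : (p : ZMod 2) = 1 := by
      rw [← Nat.mod_add_div p 2, Nat.odd_iff.mp hodd]
      push_cast
      simp [show (2 : ZMod 2) = 0 from rfl]
    rw [hpo] at h ⊢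
    revert h; generalize (ZMod.castHom (dvd_mul_right 2 p) (ZMod 2)) m = x
    revert x; decide
  have hP : (ZMod.castHom (dvd_mul_left p 2) (ZMod p)) m
      = (ZMod.castHom (dvd_mul_left p 2) (ZMod p)) ((p : ZMod (2*p))) := by
    have h := congrArg (ZMod.castHom (dvd_mul_left p 2) (ZMod p)) hm
    simp only [map_pow, map_natCast, ZMod.natCast_self] at h ⊢
    exact pow_eq_zero_iff (n := 2) two_ne_zero |>.mp h
  have key : ∀ x : ZMod (2*p), e x = ((ZMod.castHom (dvd_mul_right 2 p) (ZMod 2)) x,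
      (ZMod.castHom (dvd_mul_left p 2) (ZMod p)) x) := by
    intro x
    haveI : NeZero (2*p) := ⟨Nat.mul_ne_zero two_ne_zero hp.ne_zero⟩
    show ZMod.castHom (show Nat.lcm 2 p ∣ 2 * p by simp [Nat.lcm_dvd_iff]) (ZMod 2 × ZMod p) x = _
    ext <;> simp [ZMod.castHom_apply, ← ZMod.natCast_val, Prod.fst_natCast, Prod.snd_natCast]
  rw [key, key, h2, hP]
end

section
/- Let R be a ring and a, b ∈ R such that a·b = b^γ·a for some natural number γ ≥ 1. Then a²·b = b·(b^(γ-1)·a)². (In particular, in a quasi commutative ring, for every pair a, b there exists s ∈ R with a²b = b·s².) -/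
theorem quasi_commutative_sq_identity {R : Type*} [Ring R]
    (a b : R) (γ : ℕ) (hγ : 1 ≤ γ) (h : a * b = b ^ γ * a) :
    a ^ 2 * b = b * (b ^ (γ - 1) * a) ^ 2 := by
  obtain ⟨k, rfl⟩ : ∃ k, γ = k + 1 := ⟨γ - 1, (Nat.succ_pred_eq_of_pos hγ).symm⟩
  simp only [Nat.add_sub_cancel]
  calc a ^ 2 * b = a * (a * b) := by noncomm_ring
    _ = a * (b ^ (k+1) * a) := by rw [h]
    _ = (a * b) * (b ^ k * a) := by rw [pow_succ']; noncomm_ring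
    _ = b ^ (k+1) * a * (b ^ k * a) := by rw [h]
    _ = b * (b ^ k * a) ^ 2 := by rw [pow_succ']; noncomm_ring
end
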